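/- For every Schwartz function v : ℝ² → ℂ one has the Pohozaev-type identity Re ∫_{ℝ²} (Δv(y) + v(y)|v(y)|²) · conj( v(y) + y·∇v(y) ) dy = − ∫_{ℝ²} |∇v(y)|² dy + (1/2) ∫_{ℝ²} |v(y)|⁴ dy. -/

import Mathlib

open MeasureTheory SchwartzMap ComplexConjugate

noncomputable section

abbrev E2 := EuclideanSpace ℝ (Fin 2)

def ee (i : Fin 2) : E2 := EuclideanSpace.single i 1
lemma SchwartzMap.hasTemperateGrowth' {E F : Type*} [NormedAddCommGroup E] [NormedSpace ℝ E]
    [NormedAddCommGroup F] [NormedSpace ℝ F] (f : SchwartzMap E F) :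
    Function.HasTemperateGrowth ⇑f :=
  ⟨f.smooth', fun n => ⟨0, SchwartzMap.seminorm ℝ 0 n f, fun x => by
    simpa using f.norm_iteratedFDeriv_le_seminorm ℝ n x⟩⟩
def Ds (i : Fin 2) (f : SchwartzMap E2 ℂ) : SchwartzMap E2 ℂ := LineDeriv.lineDerivOp (ee i) f
lemma Ds_apply (i : Fin 2) (f : SchwartzMap E2 ℂ) (x : E2) :
    Ds i f x = fderiv ℝ f x (ee i) := SchwartzMap.lineDerivOp_apply_eq_fderiv _ f x
def Ms (f g : SchwartzMap E2 ℂ) : SchwartzMap E2 ℂ :=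
  bilinLeftCLM (ContinuousLinearMap.mul ℝ ℂ) g.hasTemperateGrowth' f
lemma Ms_apply (f g : SchwartzMap E2 ℂ) (x : E2) : Ms f g x = f x * g x := rfl
def coordC (i : Fin 2) : E2 →L[ℝ] ℂ := Complex.ofRealCLM.comp (EuclideanSpace.proj i)
def Xs (i : Fin 2) (f : SchwartzMap E2 ℂ) : SchwartzMap E2 ℂ :=
  bilinLeftCLM ((ContinuousLinearMap.mul ℝ ℂ).flip) (coordC i).hasTemperateGrowth f
lemma Xs_apply (i : Fin 2) (f : SchwartzMap E2 ℂ) (x : E2) : Xs i f x = (x i : ℂ) * f x := rfl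
def Cs (f : SchwartzMap E2 ℂ) : SchwartzMap E2 ℂ :=
  bilinLeftCLM ((ContinuousLinearMap.mul ℝ ℂ).comp Complex.conjCLE.toContinuousLinearMap)
    (Function.HasTemperateGrowth.const (1:ℂ)) f
lemma Cs_apply (f : SchwartzMap E2 ℂ) (x : E2) : Cs f x = conj (f x) := mul_one _
lemma Cs_coe (f : SchwartzMap E2 ℂ) : ⇑(Cs f) = fun x => conj (f x) := funext (Cs_apply f)

lemma fderiv_conj_apply (f : E2 → ℂ) (x w : E2) (hf : DifferentiableAt ℝ f x) :
    fderiv ℝ (fun y => conj (f y)) x w = conj (fderiv ℝ f x w) := by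
  have h : fderiv ℝ (fun y => conj (f y)) x
      = (Complex.conjCLE.toContinuousLinearMap).comp (fderiv ℝ f x) :=
    (Complex.conjCLE.toContinuousLinearMap.hasFDerivAt.comp x hf.hasFDerivAt).fderiv
  rw [h]; rfl

lemma fderiv_Cs (f : SchwartzMap E2 ℂ) (x w : E2) :
    fderiv ℝ (⇑(Cs f)) x w = conj (fderiv ℝ f x w) := by
  rw [Cs_coe]; exact fderiv_conj_apply (⇑f) x w f.differentiableAt

lemma fderiv_mul_apply (f g : E2 → ℂ) (x w : E2) (hf : DifferentiableAt ℝ f x)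
    (hg : DifferentiableAt ℝ g x) :
    fderiv ℝ (fun y => f y * g y) x w = f x * fderiv ℝ g x w + g x * fderiv ℝ f x w := by
  rw [fderiv_fun_mul hf hg]; simp [smul_eq_mul]

lemma Ms_coe (f g : SchwartzMap E2 ℂ) : ⇑(Ms f g) = fun x => f x * g x := rfl

lemma fderiv_Ms (f g : SchwartzMap E2 ℂ) (x w : E2) :
    fderiv ℝ (⇑(Ms f g)) x w = f x * fderiv ℝ g x w + g x * fderiv ℝ f x w := by
  rw [Ms_coe]; exact fderiv_mul_apply _ _ x w f.differentiableAt g.differentiableAt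

lemma fderiv_coord (i : Fin 2) (x w : E2) :
    fderiv ℝ (fun y : E2 => (y i : ℂ)) x w = (w i : ℂ) := by
  have h : (fun y : E2 => (y i : ℂ)) = ⇑(coordC i) := rfl
  rw [h, ContinuousLinearMap.fderiv]; rfl

lemma Xs_coe (i : Fin 2) (f : SchwartzMap E2 ℂ) : ⇑(Xs i f) = fun x => (x i : ℂ) * f x := rfl

lemma fderiv_Xs (i : Fin 2) (f : SchwartzMap E2 ℂ) (x w : E2) :
    fderiv ℝ (⇑(Xs i f)) x w = (w i : ℂ) * f x + (x i : ℂ) * fderiv ℝ f x w := by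
  rw [Xs_coe]
  have hc : DifferentiableAt ℝ (fun y : E2 => (y i : ℂ)) x := by
    have h : (fun y : E2 => (y i : ℂ)) = ⇑(coordC i) := rfl
    rw [h]; exact (coordC i).differentiable.differentiableAt
  rw [fderiv_mul_apply _ _ x w hc f.differentiableAt, fderiv_coord]; ring

lemma Ds_comm (v : SchwartzMap E2 ℂ) (i j : Fin 2) (x : E2) :
    Ds i (Ds j v) x = Ds j (Ds i v) x := by
  have hv : ∀ k : Fin 2, ⇑(Ds k v) = fun y => fderiv ℝ v y (ee k) := by
    intro k; funext y; exact Ds_apply k v y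
  have hdiff : DifferentiableAt ℝ (fderiv ℝ ⇑v) x := by
    have h1 : ContDiff ℝ 1 (fderiv ℝ ⇑v) :=
      (v.smooth ⊤).fderiv_right (by exact WithTop.coe_le_coe.2 le_top)
    exact (h1.differentiable one_ne_zero).differentiableAt
  have key : ∀ a b : E2, fderiv ℝ (fun y => fderiv ℝ (⇑v) y a) x b
      = fderiv ℝ (fderiv ℝ ⇑v) x b a := by
    intro a b
    rw [fderiv_clm_apply hdiff (differentiableAt_const a)]
    simp
  have hsymm : ∀ a b : E2, fderiv ℝ (fderiv ℝ ⇑v) x a b = fderiv ℝ (fderiv ℝ ⇑v) x b a := by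
    intro a b
    have h2 : ContDiffAt ℝ 2 (⇑v) x :=
      ((v.smooth ⊤).of_le (by exact WithTop.coe_le_coe.2 le_top)).contDiffAt
    exact (h2.isSymmSndFDerivAt (by norm_num)).eq a b
  rw [Ds_apply, Ds_apply, hv, hv, key, key, hsymm]

lemma intg {h : E2 → ℂ} (f : SchwartzMap E2 ℂ) (he : ∀ x, f x = h x) :
    Integrable h (volume : Measure E2) := (funext he) ▸ f.integrable

lemma ibp (f g : SchwartzMap E2 ℂ) (i : Fin 2) :
    ∫ x : E2, f x * fderiv ℝ g x (ee i) = - ∫ x : E2, fderiv ℝ f x (ee i) * g x := by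
  apply integral_mul_fderiv_eq_neg_fderiv_mul_of_integrable
  · exact intg (Ms (Ds i f) g) (fun x => by rw [Ms_apply, Ds_apply])
  · exact intg (Ms f (Ds i g)) (fun x => by rw [Ms_apply, Ds_apply])
  · exact intg (Ms f g) (fun x => by rw [Ms_apply])
  · exact fun x _ => f.differentiableAt
  · exact fun x _ => g.differentiableAt

lemma ee_self (i : Fin 2) : (ee i) i = 1 := by simp [ee]

lemma ibp_coord (g : SchwartzMap E2 ℂ) (i : Fin 2) :
    ∫ x : E2, (x i : ℂ) * fderiv ℝ g x (ee i) = - ∫ x : E2, g x := by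
  have key : ∫ x : E2, (fun y : E2 => (y i : ℂ)) x * fderiv ℝ g x (ee i)
      = - ∫ x : E2, fderiv ℝ (fun y : E2 => (y i : ℂ)) x (ee i) * g x := by
    apply integral_mul_fderiv_eq_neg_fderiv_mul_of_integrable
    · have h : (fun x : E2 => fderiv ℝ (fun y : E2 => (y i : ℂ)) x (ee i) * g x)
          = fun x : E2 => (1 : ℂ) * g x := by
        funext x; rw [fderiv_coord, ee_self]; norm_num
      rw [h]; simpa using g.integrable
    · exact intg (Xs i (Ds i g)) (fun x => by rw [Xs_apply, Ds_apply])
    · exact intg (Xs i g) (fun x => by rw [Xs_apply])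
    · exact fun x _ => (coordC i).differentiableAt
    · exact fun x _ => g.differentiableAt
  simp only at key
  rw [key]
  congr 1
  refine integral_congr_ae (.of_forall fun x => ?_)
  show fderiv ℝ (fun y : E2 => (y i : ℂ)) x (ee i) * g x = g x
  rw [fderiv_coord, ee_self]; norm_num


lemma integral_ofReal' (f : E2 → ℝ) :
    ∫ x : E2, ((f x : ℝ) : ℂ) = ((∫ x : E2, f x : ℝ) : ℂ) := integral_ofReal

lemma L1 (v : SchwartzMap E2 ℂ) (j : Fin 2) :
    (∫ x : E2, Ds j (Ds j v) x * conj (v x)).re = -∫ x : E2, ‖Ds j v x‖^2 := by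
  have h1 : ∫ x : E2, Ds j (Ds j v) x * conj (v x)
      = ∫ x : E2, (Cs v) x * fderiv ℝ (Ds j v) x (ee j) := by
    refine integral_congr_ae (.of_forall fun x => ?_)
    show Ds j (Ds j v) x * conj (v x) = (Cs v) x * fderiv ℝ (Ds j v) x (ee j)
    rw [Cs_apply, ← Ds_apply]; ring
  rw [h1, ibp (Cs v) (Ds j v) j]
  have h2 : ∫ x : E2, fderiv ℝ (Cs v) x (ee j) * (Ds j v) x
      = ((∫ x : E2, ‖Ds j v x‖^2 : ℝ) : ℂ) := by
    rw [← integral_ofReal']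
    refine integral_congr_ae (.of_forall fun x => ?_)
    show fderiv ℝ (Cs v) x (ee j) * (Ds j v) x = ((‖Ds j v x‖^2 : ℝ) : ℂ)
    rw [fderiv_Cs, ← Ds_apply]
    exact_mod_cast Complex.conj_mul' (Ds j v x)
  rw [h2]; simp

lemma L3 (v : SchwartzMap E2 ℂ) :
    (∫ x : E2, v x * ((‖v x‖ : ℂ))^2 * conj (v x)).re = ∫ x : E2, ‖v x‖^4 := by
  have h : ∫ x : E2, v x * ((‖v x‖ : ℂ))^2 * conj (v x)
      = ((∫ x : E2, ‖v x‖^4 : ℝ) : ℂ) := by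
    rw [← integral_ofReal']
    refine integral_congr_ae (.of_forall fun x => ?_)
    show v x * ((‖v x‖ : ℂ))^2 * conj (v x) = ((‖v x‖^4 : ℝ) : ℂ)
    have h2 : v x * conj (v x) = ((‖v x‖^2 : ℝ) : ℂ) := by
      exact_mod_cast Complex.mul_conj' (v x)
    calc v x * ((‖v x‖ : ℂ))^2 * conj (v x) = (v x * conj (v x)) * ((‖v x‖ : ℂ))^2 := by ring
      _ = ((‖v x‖^4 : ℝ) : ℂ) := by rw [h2]; push_cast; ring
  rw [h]; simp

lemma sq_int (f : SchwartzMap E2 ℂ) :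
    ∫ x : E2, (Ms f (Cs f)) x = ((∫ x : E2, ‖f x‖^2 : ℝ) : ℂ) := by
  rw [← integral_ofReal']
  refine integral_congr_ae (.of_forall fun x => ?_)
  show (Ms f (Cs f)) x = ((‖f x‖^2 : ℝ) : ℂ)
  rw [Ms_apply, Cs_apply]
  exact_mod_cast Complex.mul_conj' (f x)

lemma L2 (v : SchwartzMap E2 ℂ) (i j : Fin 2) :
    (∫ x : E2, Ds j (Ds j v) x * ((x i : ℂ) * conj (Ds i v x))).re
      = (1/2) * (∫ x : E2, ‖Ds j v x‖^2)
        - (if j = i then (∫ x : E2, ‖Ds j v x‖^2) else 0) := by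
  set K := ∫ x : E2, ‖Ds j v x‖^2 with hK
  have h1 : ∫ x : E2, Ds j (Ds j v) x * ((x i : ℂ) * conj (Ds i v x))
      = ∫ x : E2, (Xs i (Cs (Ds i v))) x * fderiv ℝ (Ds j v) x (ee j) := by
    refine integral_congr_ae (.of_forall fun x => ?_)
    show Ds j (Ds j v) x * ((x i : ℂ) * conj (Ds i v x))
        = (Xs i (Cs (Ds i v))) x * fderiv ℝ (Ds j v) x (ee j)
    rw [Xs_apply, Cs_apply, ← Ds_apply]; ring
  rw [h1, ibp]
  have h2 : ∀ x : E2, fderiv ℝ (Xs i (Cs (Ds i v))) x (ee j)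
      = (((ee j) i : ℝ) : ℂ) * conj (Ds i v x) + (x i : ℂ) * conj (Ds i (Ds j v) x) := by
    intro x
    rw [fderiv_Xs, Cs_apply, fderiv_Cs, ← Ds_apply]
    rw [← Ds_comm v j i x]
  have e1 : (fun x : E2 => fderiv ℝ (Xs i (Cs (Ds i v))) x (ee j) * (Ds j v) x)
      = fun x : E2 => (((ee j) i : ℝ) : ℂ) * (conj (Ds i v x) * Ds j v x)
        + (x i : ℂ) * conj (Ds i (Ds j v) x) * Ds j v x := by
    funext x; rw [h2]; ring
  have int1 : Integrable (fun x : E2 => conj (Ds i v x) * Ds j v x) volume :=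
    intg (Ms (Cs (Ds i v)) (Ds j v)) (fun x => by rw [Ms_apply, Cs_apply])
  have int2 : Integrable
      (fun x : E2 => (x i : ℂ) * conj (Ds i (Ds j v) x) * Ds j v x) volume :=
    intg (Ms (Xs i (Cs (Ds i (Ds j v)))) (Ds j v))
      (fun x => by rw [Ms_apply, Xs_apply, Cs_apply])
  rw [e1, integral_add (int1.const_mul _) int2, integral_const_mul]
  set C := ∫ x : E2, conj (Ds i v x) * Ds j v x with hC
  set R := ∫ x : E2, (x i : ℂ) * conj (Ds i (Ds j v) x) * Ds j v x with hRdef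
  -- compute R + conj R
  have key : R + conj R = -((K : ℝ) : ℂ) := by
    have hconj : conj R
        = ∫ x : E2, conj ((x i : ℂ) * conj (Ds i (Ds j v) x) * Ds j v x) :=
      (integral_conj).symm
    have int3 : Integrable
        (fun x : E2 => conj ((x i : ℂ) * conj (Ds i (Ds j v) x) * Ds j v x)) volume :=
      intg (Cs (Ms (Xs i (Cs (Ds i (Ds j v)))) (Ds j v)))
        (fun x => by rw [Cs_apply, Ms_apply, Xs_apply, Cs_apply])
    rw [hRdef, hconj, ← integral_add int2 int3]
    have e2 : (fun x : E2 => (x i : ℂ) * conj (Ds i (Ds j v) x) * Ds j v x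
        + conj ((x i : ℂ) * conj (Ds i (Ds j v) x) * Ds j v x))
        = fun x : E2 => (x i : ℂ) * fderiv ℝ (Ms (Ds j v) (Cs (Ds j v))) x (ee i) := by
      funext x
      rw [fderiv_Ms, Cs_apply, fderiv_Cs, ← Ds_apply]
      simp only [map_mul, Complex.conj_conj, Complex.conj_ofReal]
      ring
    rw [e2, ibp_coord (Ms (Ds j v) (Cs (Ds j v))) i, sq_int (Ds j v), ← hK]
  have hRre : R.re = -(1/2) * K := by
    have h3 : (R + conj R).re = 2 * R.re := by
      rw [Complex.add_re, Complex.conj_re]; ring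
    rw [key] at h3
    simp only [Complex.neg_re, Complex.ofReal_re] at h3
    linarith
  by_cases hji : j = i
  · subst hji
    have hCval : C = ((K : ℝ) : ℂ) := by
      rw [hC, hK, ← sq_int (Ds j v)]
      refine integral_congr_ae (.of_forall fun x => ?_)
      show conj (Ds j v x) * Ds j v x = (Ms (Ds j v) (Cs (Ds j v))) x
      rw [Ms_apply, Cs_apply]; ring
    rw [hCval]
    simp only [ee_self, if_pos rfl, Complex.neg_re, Complex.add_re, Complex.mul_re,
      Complex.ofReal_re, Complex.ofReal_im]
    rw [hRre]; ring_nf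
    simp [Complex.ofReal_re]
    ring
  · have hδ : (ee j) i = 0 := by
      simp only [ee, EuclideanSpace.single_apply, if_neg (fun h : i = j => hji h.symm)]
    rw [hδ]
    simp only [Complex.ofReal_zero, zero_mul, zero_add, Complex.neg_re, if_neg hji]
    rw [hRre]; ring

lemma normsq_c (z : ℂ) : ((‖z‖ : ℂ))^2 = z * conj z := (Complex.mul_conj' z).symm

lemma L4 (v : SchwartzMap E2 ℂ) (i : Fin 2) :
    (∫ x : E2, v x * ((‖v x‖ : ℂ))^2 * ((x i : ℂ) * conj (Ds i v x))).re
      = -(1/4) * ∫ x : E2, ‖v x‖^4 := by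
  set K := ∫ x : E2, ‖v x‖^4 with hK
  set R := ∫ x : E2, v x * ((‖v x‖ : ℂ))^2 * ((x i : ℂ) * conj (Ds i v x)) with hRdef
  have intW : Integrable
      (fun x : E2 => v x * ((‖v x‖ : ℂ))^2 * ((x i : ℂ) * conj (Ds i v x))) volume := by
    refine intg (Ms (Ms v (Cs v)) (Ms v (Xs i (Cs (Ds i v))))) (fun x => ?_)
    rw [Ms_apply, Ms_apply, Ms_apply, Xs_apply, Cs_apply, Cs_apply, normsq_c]
    try ring
  have intWc : Integrable
      (fun x : E2 => conj (v x * ((‖v x‖ : ℂ))^2 * ((x i : ℂ) * conj (Ds i v x)))) volume := by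
    refine intg (Cs (Ms (Ms v (Cs v)) (Ms v (Xs i (Cs (Ds i v)))))) (fun x => ?_)
    rw [Cs_apply, Ms_apply, Ms_apply, Ms_apply, Xs_apply, Cs_apply, Cs_apply, normsq_c]
    try ring
  have intG : ∫ x : E2, (Ms (Ms v (Cs v)) (Ms v (Cs v))) x = ((K : ℝ) : ℂ) := by
    rw [hK, ← integral_ofReal']
    refine integral_congr_ae (.of_forall fun x => ?_)
    show (Ms (Ms v (Cs v)) (Ms v (Cs v))) x = ((‖v x‖^4 : ℝ) : ℂ)
    simp only [Ms_apply, Cs_apply]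
    rw [← normsq_c]
    push_cast; ring
  have key : R + conj R = -(1/2 : ℂ) * ((K : ℝ) : ℂ) := by
    have hconj : conj R
        = ∫ x : E2, conj (v x * ((‖v x‖ : ℂ))^2 * ((x i : ℂ) * conj (Ds i v x))) :=
      (integral_conj).symm
    rw [hRdef, hconj, ← integral_add intW intWc]
    have e2 : (fun x : E2 => v x * ((‖v x‖ : ℂ))^2 * ((x i : ℂ) * conj (Ds i v x))
        + conj (v x * ((‖v x‖ : ℂ))^2 * ((x i : ℂ) * conj (Ds i v x))))
        = fun x : E2 => (1/2 : ℂ) * ((x i : ℂ)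
            * fderiv ℝ (Ms (Ms v (Cs v)) (Ms v (Cs v))) x (ee i)) := by
      funext x
      rw [fderiv_Ms, fderiv_Ms, Cs_apply, fderiv_Cs, ← Ds_apply, Ms_apply, Cs_apply, normsq_c]
      simp only [map_mul, Complex.conj_conj, Complex.conj_ofReal, map_pow]
      push_cast
      ring
    rw [e2, integral_const_mul, ibp_coord (Ms (Ms v (Cs v)) (Ms v (Cs v))) i, intG]
    ring
  have h3 : (R + conj R).re = 2 * R.re := by rw [Complex.add_re, Complex.conj_re]; ring
  rw [key] at h3
  have : (-(1/2 : ℂ) * ((K : ℝ) : ℂ)).re = -(1/2) * K := by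
    simp [Complex.mul_re]
  rw [this] at h3
  linarith

/-- The partial derivative `∂f/∂yᵢ` of a complex-valued function on `ℝ²`. -/
def pdC (i : Fin 2) (f : E2 → ℂ) (y : E2) : ℂ :=
  fderiv ℝ f y (EuclideanSpace.single i 1)

/-- The Laplacian on `ℝ²`. -/
def lapC (f : E2 → ℂ) (y : E2) : ℂ :=
  ∑ i, pdC i (pdC i f) y

/-- Pohozaev-type identity: for a Schwartz function `v : ℝ² → ℂ`,
`Re ∫ (Δv + v|v|²) conj(v + y·∇v) = -∫ |∇v|² + (1/2) ∫ |v|⁴`. -/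
lemma pdC_eq (v : SchwartzMap E2 ℂ) (i : Fin 2) (x : E2) :
    pdC i (⇑v) x = Ds i v x := (Ds_apply i v x).symm

lemma pdC2_eq (v : SchwartzMap E2 ℂ) (i : Fin 2) (x : E2) :
    pdC i (pdC i (⇑v)) x = Ds i (Ds i v) x := by
  have hcoe : pdC i (⇑v) = ⇑(Ds i v) := funext fun y => pdC_eq v i y
  show fderiv ℝ (pdC i (⇑v)) x (EuclideanSpace.single i 1) = Ds i (Ds i v) x
  rw [hcoe]
  exact (Ds_apply i (Ds i v) x).symm

lemma intg_normsq (f : SchwartzMap E2 ℂ) :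
    Integrable (fun x : E2 => ‖f x‖^2) (volume : Measure E2) := by
  refine ((Ms f (Cs f)).integrable.re).congr (.of_forall fun x => ?_)
  show ((Ms f (Cs f)) x).re = ‖f x‖^2
  have h : (Ms f (Cs f)) x = ((‖f x‖^2 : ℝ) : ℂ) := by
    rw [Ms_apply, Cs_apply]; exact_mod_cast Complex.mul_conj' (f x)
  rw [h, Complex.ofReal_re]

theorem pohozaev_identity (v : SchwartzMap E2 ℂ) :
    (∫ y : E2,
        (lapC (⇑v) y + v y * (‖v y‖ : ℂ) ^ 2) *
          (starRingEnd ℂ) (v y + ∑ i, (y i : ℂ) * pdC i (⇑v) y)).re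
      = -(∫ y : E2, ∑ i, ‖pdC i (⇑v) y‖ ^ 2) + (1 / 2) * ∫ y : E2, ‖v y‖ ^ 4 := by
  have i1 : ∀ j, Integrable (fun y : E2 => Ds j (Ds j v) y * conj (v y)) volume :=
    fun j => intg (Ms (Ds j (Ds j v)) (Cs v)) (fun x => by rw [Ms_apply, Cs_apply])
  have i2 : ∀ j i, Integrable
      (fun y : E2 => Ds j (Ds j v) y * ((y i : ℂ) * conj (Ds i v y))) volume :=
    fun j i => intg (Ms (Ds j (Ds j v)) (Xs i (Cs (Ds i v))))
      (fun x => by rw [Ms_apply, Xs_apply, Cs_apply])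
  have i3 : Integrable (fun y : E2 => v y * ((‖v y‖ : ℂ))^2 * conj (v y)) volume := by
    refine intg (Ms (Ms v (Ms v (Cs v))) (Cs v)) (fun x => ?_)
    simp only [Ms_apply, Cs_apply]
    rw [normsq_c]; try ring
  have i4 : ∀ i, Integrable
      (fun y : E2 => v y * ((‖v y‖ : ℂ))^2 * ((y i : ℂ) * conj (Ds i v y))) volume := by
    intro i
    refine intg (Ms (Ms v (Cs v)) (Ms v (Xs i (Cs (Ds i v))))) (fun x => ?_)
    simp only [Ms_apply, Xs_apply, Cs_apply]
    rw [normsq_c]; try ring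
  have hpt : (∫ y : E2,
        (lapC (⇑v) y + v y * (‖v y‖ : ℂ) ^ 2) *
          (starRingEnd ℂ) (v y + ∑ i, (y i : ℂ) * pdC i (⇑v) y))
      = ∫ y : E2, (Ds 0 (Ds 0 v) y * conj (v y) + (Ds 1 (Ds 1 v) y * conj (v y) + (Ds 0 (Ds 0 v) y * ((y 0 : ℂ) * conj (Ds 0 v y)) + (Ds 0 (Ds 0 v) y * ((y 1 : ℂ) * conj (Ds 1 v y)) + (Ds 1 (Ds 1 v) y * ((y 0 : ℂ) * conj (Ds 0 v y)) + (Ds 1 (Ds 1 v) y * ((y 1 : ℂ) * conj (Ds 1 v y)) + (v y * ((‖v y‖ : ℂ))^2 * conj (v y) + (v y * ((‖v y‖ : ℂ))^2 * ((y 0 : ℂ) * conj (Ds 0 v y)) + (v y * ((‖v y‖ : ℂ))^2 * ((y 1 : ℂ) * conj (Ds 1 v y))))))))))) := by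
    refine integral_congr_ae (.of_forall fun y => ?_)
    show (lapC (⇑v) y + v y * (‖v y‖ : ℂ) ^ 2) *
          conj (v y + ∑ i, (y i : ℂ) * pdC i (⇑v) y) = _
    simp only [lapC, Fin.sum_univ_two, pdC2_eq v, pdC_eq v, map_add, map_mul,
      Complex.conj_ofReal]
    ring
  have s0 : (∫ y : E2, (Ds 0 (Ds 0 v) y * conj (v y) + (Ds 1 (Ds 1 v) y * conj (v y) + (Ds 0 (Ds 0 v) y * ((y 0 : ℂ) * conj (Ds 0 v y)) + (Ds 0 (Ds 0 v) y * ((y 1 : ℂ) * conj (Ds 1 v y)) + (Ds 1 (Ds 1 v) y * ((y 0 : ℂ) * conj (Ds 0 v y)) + (Ds 1 (Ds 1 v) y * ((y 1 : ℂ) * conj (Ds 1 v y)) + (v y * ((‖v y‖ : ℂ))^2 * conj (v y) + (v y * ((‖v y‖ : ℂ))^2 * ((y 0 : ℂ) * conj (Ds 0 v y)) + (v y * ((‖v y‖ : ℂ))^2 * ((y 1 : ℂ) * conj (Ds 1 v y))))))))))))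
      = (∫ y : E2, Ds 0 (Ds 0 v) y * conj (v y)) + ∫ y : E2, (Ds 1 (Ds 1 v) y * conj (v y) + (Ds 0 (Ds 0 v) y * ((y 0 : ℂ) * conj (Ds 0 v y)) + (Ds 0 (Ds 0 v) y * ((y 1 : ℂ) * conj (Ds 1 v y)) + (Ds 1 (Ds 1 v) y * ((y 0 : ℂ) * conj (Ds 0 v y)) + (Ds 1 (Ds 1 v) y * ((y 1 : ℂ) * conj (Ds 1 v y)) + (v y * ((‖v y‖ : ℂ))^2 * conj (v y) + (v y * ((‖v y‖ : ℂ))^2 * ((y 0 : ℂ) * conj (Ds 0 v y)) + (v y * ((‖v y‖ : ℂ))^2 * ((y 1 : ℂ) * conj (Ds 1 v y)))))))))) :=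
    integral_add (i1 0) ((i1 1).add ((i2 0 0).add ((i2 0 1).add ((i2 1 0).add ((i2 1 1).add (i3.add ((i4 0).add (i4 1))))))))
  have s1 : (∫ y : E2, (Ds 1 (Ds 1 v) y * conj (v y) + (Ds 0 (Ds 0 v) y * ((y 0 : ℂ) * conj (Ds 0 v y)) + (Ds 0 (Ds 0 v) y * ((y 1 : ℂ) * conj (Ds 1 v y)) + (Ds 1 (Ds 1 v) y * ((y 0 : ℂ) * conj (Ds 0 v y)) + (Ds 1 (Ds 1 v) y * ((y 1 : ℂ) * conj (Ds 1 v y)) + (v y * ((‖v y‖ : ℂ))^2 * conj (v y) + (v y * ((‖v y‖ : ℂ))^2 * ((y 0 : ℂ) * conj (Ds 0 v y)) + (v y * ((‖v y‖ : ℂ))^2 * ((y 1 : ℂ) * conj (Ds 1 v y)))))))))))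
      = (∫ y : E2, Ds 1 (Ds 1 v) y * conj (v y)) + ∫ y : E2, (Ds 0 (Ds 0 v) y * ((y 0 : ℂ) * conj (Ds 0 v y)) + (Ds 0 (Ds 0 v) y * ((y 1 : ℂ) * conj (Ds 1 v y)) + (Ds 1 (Ds 1 v) y * ((y 0 : ℂ) * conj (Ds 0 v y)) + (Ds 1 (Ds 1 v) y * ((y 1 : ℂ) * conj (Ds 1 v y)) + (v y * ((‖v y‖ : ℂ))^2 * conj (v y) + (v y * ((‖v y‖ : ℂ))^2 * ((y 0 : ℂ) * conj (Ds 0 v y)) + (v y * ((‖v y‖ : ℂ))^2 * ((y 1 : ℂ) * conj (Ds 1 v y))))))))) :=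
    integral_add (i1 1) ((i2 0 0).add ((i2 0 1).add ((i2 1 0).add ((i2 1 1).add (i3.add ((i4 0).add (i4 1)))))))
  have s2 : (∫ y : E2, (Ds 0 (Ds 0 v) y * ((y 0 : ℂ) * conj (Ds 0 v y)) + (Ds 0 (Ds 0 v) y * ((y 1 : ℂ) * conj (Ds 1 v y)) + (Ds 1 (Ds 1 v) y * ((y 0 : ℂ) * conj (Ds 0 v y)) + (Ds 1 (Ds 1 v) y * ((y 1 : ℂ) * conj (Ds 1 v y)) + (v y * ((‖v y‖ : ℂ))^2 * conj (v y) + (v y * ((‖v y‖ : ℂ))^2 * ((y 0 : ℂ) * conj (Ds 0 v y)) + (v y * ((‖v y‖ : ℂ))^2 * ((y 1 : ℂ) * conj (Ds 1 v y))))))))))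
      = (∫ y : E2, Ds 0 (Ds 0 v) y * ((y 0 : ℂ) * conj (Ds 0 v y))) + ∫ y : E2, (Ds 0 (Ds 0 v) y * ((y 1 : ℂ) * conj (Ds 1 v y)) + (Ds 1 (Ds 1 v) y * ((y 0 : ℂ) * conj (Ds 0 v y)) + (Ds 1 (Ds 1 v) y * ((y 1 : ℂ) * conj (Ds 1 v y)) + (v y * ((‖v y‖ : ℂ))^2 * conj (v y) + (v y * ((‖v y‖ : ℂ))^2 * ((y 0 : ℂ) * conj (Ds 0 v y)) + (v y * ((‖v y‖ : ℂ))^2 * ((y 1 : ℂ) * conj (Ds 1 v y)))))))) :=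
    integral_add (i2 0 0) ((i2 0 1).add ((i2 1 0).add ((i2 1 1).add (i3.add ((i4 0).add (i4 1))))))
  have s3 : (∫ y : E2, (Ds 0 (Ds 0 v) y * ((y 1 : ℂ) * conj (Ds 1 v y)) + (Ds 1 (Ds 1 v) y * ((y 0 : ℂ) * conj (Ds 0 v y)) + (Ds 1 (Ds 1 v) y * ((y 1 : ℂ) * conj (Ds 1 v y)) + (v y * ((‖v y‖ : ℂ))^2 * conj (v y) + (v y * ((‖v y‖ : ℂ))^2 * ((y 0 : ℂ) * conj (Ds 0 v y)) + (v y * ((‖v y‖ : ℂ))^2 * ((y 1 : ℂ) * conj (Ds 1 v y)))))))))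
      = (∫ y : E2, Ds 0 (Ds 0 v) y * ((y 1 : ℂ) * conj (Ds 1 v y))) + ∫ y : E2, (Ds 1 (Ds 1 v) y * ((y 0 : ℂ) * conj (Ds 0 v y)) + (Ds 1 (Ds 1 v) y * ((y 1 : ℂ) * conj (Ds 1 v y)) + (v y * ((‖v y‖ : ℂ))^2 * conj (v y) + (v y * ((‖v y‖ : ℂ))^2 * ((y 0 : ℂ) * conj (Ds 0 v y)) + (v y * ((‖v y‖ : ℂ))^2 * ((y 1 : ℂ) * conj (Ds 1 v y))))))) :=
    integral_add (i2 0 1) ((i2 1 0).add ((i2 1 1).add (i3.add ((i4 0).add (i4 1)))))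
  have s4 : (∫ y : E2, (Ds 1 (Ds 1 v) y * ((y 0 : ℂ) * conj (Ds 0 v y)) + (Ds 1 (Ds 1 v) y * ((y 1 : ℂ) * conj (Ds 1 v y)) + (v y * ((‖v y‖ : ℂ))^2 * conj (v y) + (v y * ((‖v y‖ : ℂ))^2 * ((y 0 : ℂ) * conj (Ds 0 v y)) + (v y * ((‖v y‖ : ℂ))^2 * ((y 1 : ℂ) * conj (Ds 1 v y))))))))
      = (∫ y : E2, Ds 1 (Ds 1 v) y * ((y 0 : ℂ) * conj (Ds 0 v y))) + ∫ y : E2, (Ds 1 (Ds 1 v) y * ((y 1 : ℂ) * conj (Ds 1 v y)) + (v y * ((‖v y‖ : ℂ))^2 * conj (v y) + (v y * ((‖v y‖ : ℂ))^2 * ((y 0 : ℂ) * conj (Ds 0 v y)) + (v y * ((‖v y‖ : ℂ))^2 * ((y 1 : ℂ) * conj (Ds 1 v y)))))) :=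
    integral_add (i2 1 0) ((i2 1 1).add (i3.add ((i4 0).add (i4 1))))
  have s5 : (∫ y : E2, (Ds 1 (Ds 1 v) y * ((y 1 : ℂ) * conj (Ds 1 v y)) + (v y * ((‖v y‖ : ℂ))^2 * conj (v y) + (v y * ((‖v y‖ : ℂ))^2 * ((y 0 : ℂ) * conj (Ds 0 v y)) + (v y * ((‖v y‖ : ℂ))^2 * ((y 1 : ℂ) * conj (Ds 1 v y)))))))
      = (∫ y : E2, Ds 1 (Ds 1 v) y * ((y 1 : ℂ) * conj (Ds 1 v y))) + ∫ y : E2, (v y * ((‖v y‖ : ℂ))^2 * conj (v y) + (v y * ((‖v y‖ : ℂ))^2 * ((y 0 : ℂ) * conj (Ds 0 v y)) + (v y * ((‖v y‖ : ℂ))^2 * ((y 1 : ℂ) * conj (Ds 1 v y))))) :=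
    integral_add (i2 1 1) (i3.add ((i4 0).add (i4 1)))
  have s6 : (∫ y : E2, (v y * ((‖v y‖ : ℂ))^2 * conj (v y) + (v y * ((‖v y‖ : ℂ))^2 * ((y 0 : ℂ) * conj (Ds 0 v y)) + (v y * ((‖v y‖ : ℂ))^2 * ((y 1 : ℂ) * conj (Ds 1 v y))))))
      = (∫ y : E2, v y * ((‖v y‖ : ℂ))^2 * conj (v y)) + ∫ y : E2, (v y * ((‖v y‖ : ℂ))^2 * ((y 0 : ℂ) * conj (Ds 0 v y)) + (v y * ((‖v y‖ : ℂ))^2 * ((y 1 : ℂ) * conj (Ds 1 v y)))) :=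
    integral_add i3 ((i4 0).add (i4 1))
  have s7 : (∫ y : E2, (v y * ((‖v y‖ : ℂ))^2 * ((y 0 : ℂ) * conj (Ds 0 v y)) + (v y * ((‖v y‖ : ℂ))^2 * ((y 1 : ℂ) * conj (Ds 1 v y)))))
      = (∫ y : E2, v y * ((‖v y‖ : ℂ))^2 * ((y 0 : ℂ) * conj (Ds 0 v y))) + ∫ y : E2, (v y * ((‖v y‖ : ℂ))^2 * ((y 1 : ℂ) * conj (Ds 1 v y))) :=
    integral_add (i4 0) (i4 1)
  have hsplit : (∫ y : E2,
        (lapC (⇑v) y + v y * (‖v y‖ : ℂ) ^ 2) *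
          (starRingEnd ℂ) (v y + ∑ i, (y i : ℂ) * pdC i (⇑v) y))
      = (∫ y : E2, Ds 0 (Ds 0 v) y * conj (v y)) + ((∫ y : E2, Ds 1 (Ds 1 v) y * conj (v y)) + ((∫ y : E2, Ds 0 (Ds 0 v) y * ((y 0 : ℂ) * conj (Ds 0 v y))) + ((∫ y : E2, Ds 0 (Ds 0 v) y * ((y 1 : ℂ) * conj (Ds 1 v y))) + ((∫ y : E2, Ds 1 (Ds 1 v) y * ((y 0 : ℂ) * conj (Ds 0 v y))) + ((∫ y : E2, Ds 1 (Ds 1 v) y * ((y 1 : ℂ) * conj (Ds 1 v y))) + ((∫ y : E2, v y * ((‖v y‖ : ℂ))^2 * conj (v y)) + ((∫ y : E2, v y * ((‖v y‖ : ℂ))^2 * ((y 0 : ℂ) * conj (Ds 0 v y))) + ((∫ y : E2, v y * ((‖v y‖ : ℂ))^2 * ((y 1 : ℂ) * conj (Ds 1 v y))))))))))) := by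
    rw [hpt, s0, s1, s2, s3, s4, s5, s6, s7]
  have hsum : (∫ y : E2, ∑ i, ‖pdC i (⇑v) y‖ ^ 2)
      = (∫ x : E2, ‖Ds 0 v x‖^2) + (∫ x : E2, ‖Ds 1 v x‖^2) := by
    rw [← integral_add (intg_normsq (Ds 0 v)) (intg_normsq (Ds 1 v))]
    refine integral_congr_ae (.of_forall fun y => ?_)
    simp [Fin.sum_univ_two, pdC_eq]
  rw [hsplit, hsum]
  simp only [Complex.add_re]
  rw [L1 v 0, L1 v 1, L2 v 0 0, L2 v 1 0, L2 v 0 1, L2 v 1 1, L3 v, L4 v 0, L4 v 1]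
  norm_num
  ring
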